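/- Let θ : (0,∞) → (0,1) satisfy lim_{s→∞} s·θ(s) = +∞, and fix x > 0 and B > 0. Suppose that for each x* > x, V(·,x*) : [x,x*] → ℝ and p(·,x*) : [x,x*] → (0,1) are continuously differentiable solutions of the system V_x = r·p·V / ( ((λ+r) − (λ+μ)p)·s ) and p_x = (λ+r)·p(p−1) / ( ((λ+r) − (λ+μ)p)·s ) with terminal conditions V(x*,x*) = B and p(x*,x*) = θ(x*). Then lim_{x*→∞} V(x,x*) = 0. -/

import Mathlib

open Set Filter

theorem stmt_11
    (r mu lam : ℝ) (hmu : 0 ≤ mu) (hr : mu < r) (hlam : 0 ≤ lam)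
    (th : ℝ → ℝ) (hthr : ∀ s : ℝ, 0 < s → th s ∈ Set.Ioo (0:ℝ) 1)
    (hthtop : Filter.Tendsto (fun s => s * th s) Filter.atTop Filter.atTop)
    (x B : ℝ) (hx : 0 < x) (hB : 0 < B)
    (V p : ℝ → ℝ → ℝ)
    (hsol : ∀ xs : ℝ, x < xs →
      (∀ s ∈ Set.Icc x xs, p s xs ∈ Set.Ioo (0:ℝ) 1) ∧
      (∀ s ∈ Set.Icc x xs,
        HasDerivAt (fun s' => V s' xs)
          (r * p s xs * V s xs / (((lam + r) - (lam + mu) * p s xs) * s)) s ∧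
        HasDerivAt (fun s' => p s' xs)
          ((lam + r) * p s xs * (p s xs - 1) / (((lam + r) - (lam + mu) * p s xs) * s)) s) ∧
      V xs xs = B ∧ p xs xs = th xs) :
    Filter.Tendsto (fun xs => V x xs) Filter.atTop (nhds 0) := by
  have hlr : (0:ℝ) < lam + r := by linarith
  set α : ℝ := r / (lam + r) with hα
  set β : ℝ := (r - mu) / (lam + r) with hβ
  have hαpos : 0 < α := div_pos (by linarith) hlr
  have hβpos : 0 < β := div_pos (by linarith) hlr
  -- key pointwise bound
  have key : ∀ xs : ℝ, x < xs →
      0 < V x xs ∧ V x xs ≤ B * ((x / (xs * th xs)) ^ β⁻¹) ^ α := by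
    intro xs hxs
    obtain ⟨hPmem, hderiv, hVB, hPth⟩ := hsol xs hxs
    have hxs0 : 0 < xs := lt_trans hx hxs
    obtain ⟨hθ0, hθ1⟩ := hthr xs hxs0
    have hwθ : (0:ℝ) < 1 - th xs := by linarith
    have hmemx : x ∈ Icc x xs := ⟨le_refl x, le_of_lt hxs⟩
    have hmemxs : xs ∈ Icc x xs := ⟨le_of_lt hxs, le_refl xs⟩
    obtain ⟨hPx0, hPx1⟩ := hPmem x hmemx
    have hwx : (0:ℝ) < 1 - p x xs := by linarith
    -- invariant F : V * (1-p)^(-α)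
    have hF : ∀ s ∈ Icc x xs,
        HasDerivAt (fun s' => V s' xs * (1 - p s' xs) ^ (-α)) 0 s := by
      intro s hs
      have hs0 : 0 < s := lt_of_lt_of_le hx hs.1
      obtain ⟨hp0, hp1⟩ := hPmem s hs
      obtain ⟨hV', hp'⟩ := hderiv s hs
      have hw : (0:ℝ) < 1 - p s xs := by linarith
      have hD : (0:ℝ) < (lam + r) - (lam + mu) * p s xs := by nlinarith
      have h1 : HasDerivAt (fun s' => 1 - p s' xs)
          (0 - (lam + r) * p s xs * (p s xs - 1) / (((lam + r) - (lam + mu) * p s xs) * s)) s :=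
        (hasDerivAt_const s (1:ℝ)).sub hp'
      have h2 : HasDerivAt (fun y : ℝ => y ^ (-α)) (-α * (1 - p s xs) ^ (-α - 1)) (1 - p s xs) :=
        Real.hasDerivAt_rpow_const (Or.inl hw.ne')
      have h4 := hV'.mul (h2.comp s h1)
      have hws : (1 - p s xs) ^ (-α - 1) = (1 - p s xs) ^ (-α) / (1 - p s xs) := by
        rw [Real.rpow_sub hw, Real.rpow_one]
      simp only [Function.comp] at h4
      rw [hws] at h4
      have hE : r * p s xs * V s xs / (((lam + r) - (lam + mu) * p s xs) * s)
            * (1 - p s xs) ^ (-α)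
          + V s xs * (-α * ((1 - p s xs) ^ (-α) / (1 - p s xs))
            * (0 - (lam + r) * p s xs * (p s xs - 1)
                / (((lam + r) - (lam + mu) * p s xs) * s))) = 0 := by
        rw [hα]; field_simp; ring
      rwa [hE] at h4
    -- invariant G : s * p * (1-p)^(-β)
    have hG : ∀ s ∈ Icc x xs,
        HasDerivAt (fun s' => s' * p s' xs * (1 - p s' xs) ^ (-β)) 0 s := by
      intro s hs
      have hs0 : 0 < s := lt_of_lt_of_le hx hs.1
      obtain ⟨hp0, hp1⟩ := hPmem s hs
      obtain ⟨hV', hp'⟩ := hderiv s hs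
      have hw : (0:ℝ) < 1 - p s xs := by linarith
      have hD : (0:ℝ) < (lam + r) - (lam + mu) * p s xs := by nlinarith
      have h1 : HasDerivAt (fun s' => 1 - p s' xs)
          (0 - (lam + r) * p s xs * (p s xs - 1) / (((lam + r) - (lam + mu) * p s xs) * s)) s :=
        (hasDerivAt_const s (1:ℝ)).sub hp'
      have h2 : HasDerivAt (fun y : ℝ => y ^ (-β)) (-β * (1 - p s xs) ^ (-β - 1)) (1 - p s xs) :=
        Real.hasDerivAt_rpow_const (Or.inl hw.ne')
      have h3 : HasDerivAt (fun s' => s' * p s' xs)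
          (1 * p s xs + s * ((lam + r) * p s xs * (p s xs - 1)
            / (((lam + r) - (lam + mu) * p s xs) * s))) s :=
        (hasDerivAt_id s).mul hp'
      have h4 := h3.mul (h2.comp s h1)
      have hws : (1 - p s xs) ^ (-β - 1) = (1 - p s xs) ^ (-β) / (1 - p s xs) := by
        rw [Real.rpow_sub hw, Real.rpow_one]
      simp only [Function.comp] at h4
      rw [hws] at h4
      have hE : (1 * p s xs + s * ((lam + r) * p s xs * (p s xs - 1)
            / (((lam + r) - (lam + mu) * p s xs) * s)))
            * (1 - p s xs) ^ (-β)
          + s * p s xs * (-β * ((1 - p s xs) ^ (-β) / (1 - p s xs))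
            * (0 - (lam + r) * p s xs * (p s xs - 1)
                / (((lam + r) - (lam + mu) * p s xs) * s))) = 0 := by
        have hb : β * (lam + r) = r - mu := by rw [hβ]; field_simp
        have hw' := hw.ne'
        have hs' := hs0.ne'
        generalize (1 - p s xs) ^ (-β) = y
        generalize hDD : (lam + r) - (lam + mu) * p s xs = D at hD ⊢
        have hD' := hD.ne'
        field_simp
        linear_combination (-(p s xs * y * (1 - p s xs))) * hDD - (p s xs * y * (1 - p s xs) * p s xs) * hb
      rwa [hE] at h4
    -- constancy
    have hFc : V xs xs * (1 - p xs xs) ^ (-α) = V x xs * (1 - p x xs) ^ (-α) :=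
      constant_of_has_deriv_right_zero
        (fun s hs => ((hF s hs).continuousAt).continuousWithinAt)
        (fun s hs => (hF s (Ico_subset_Icc_self hs)).hasDerivWithinAt) xs hmemxs
    have hGc : xs * p xs xs * (1 - p xs xs) ^ (-β) = x * p x xs * (1 - p x xs) ^ (-β) :=
      constant_of_has_deriv_right_zero
        (fun s hs => ((hG s hs).continuousAt).continuousWithinAt)
        (fun s hs => (hG s (Ico_subset_Icc_self hs)).hasDerivWithinAt) xs hmemxs
    rw [hVB, hPth] at hFc
    rw [hPth] at hGc
    -- derive formulas
    have hwxne : (1 - p x xs) ≠ 0 := hwx.ne'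
    have hwθne : (1 - th xs) ≠ 0 := hwθ.ne'
    have hrne : ∀ (w : ℝ), 0 < w → ∀ c : ℝ, w ^ (-c) = (w ^ c)⁻¹ := by
      intro w hw c; rw [Real.rpow_neg hw.le]
    have hVx : V x xs = B * ((1 - p x xs) / (1 - th xs)) ^ α := by
      rw [Real.div_rpow hwx.le hwθ.le]
      rw [hrne _ hwθ, hrne _ hwx] at hFc
      have h1 : (0:ℝ) < (1 - p x xs) ^ α := Real.rpow_pos_of_pos hwx _
      have h2 : (0:ℝ) < (1 - th xs) ^ α := Real.rpow_pos_of_pos hwθ _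
      field_simp at hFc ⊢
      linarith [hFc]
    have htβ : ((1 - p x xs) / (1 - th xs)) ^ β = x * p x xs / (xs * th xs) := by
      rw [Real.div_rpow hwx.le hwθ.le]
      rw [hrne _ hwθ, hrne _ hwx] at hGc
      have h1 : (0:ℝ) < (1 - p x xs) ^ β := Real.rpow_pos_of_pos hwx _
      have h2 : (0:ℝ) < (1 - th xs) ^ β := Real.rpow_pos_of_pos hwθ _
      have h3 : (0:ℝ) < xs * th xs := by positivity
      field_simp at hGc ⊢
      linarith [hGc]
    have ht0 : (0:ℝ) < (1 - p x xs) / (1 - th xs) := by positivity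
    constructor
    · rw [hVx]; positivity
    · -- bound
      have hb1 : ((1 - p x xs) / (1 - th xs)) ^ β ≤ x / (xs * th xs) := by
        rw [htβ]
        apply div_le_div_of_nonneg_right ?_ ?_ |>.trans_eq rfl
        · nlinarith
        · positivity
      have hb2 : (1 - p x xs) / (1 - th xs) ≤ (x / (xs * th xs)) ^ β⁻¹ := by
        have := Real.rpow_le_rpow (Real.rpow_nonneg ht0.le _) hb1 (inv_pos.mpr hβpos).le
        rwa [Real.rpow_rpow_inv ht0.le hβpos.ne'] at this
      rw [hVx]
      exact mul_le_mul_of_nonneg_left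
        (Real.rpow_le_rpow ht0.le hb2 hαpos.le) hB.le
  -- limit
  have h1 : Tendsto (fun xs => x / (xs * th xs)) atTop (nhds 0) := by
    have h := hthtop.inv_tendsto_atTop
    have h2 := h.const_mul x
    simpa [div_eq_mul_inv] using h2
  have c1 : Tendsto (fun y : ℝ => y ^ β⁻¹) (nhds 0) (nhds 0) := by
    have h := (Real.continuousAt_rpow_const 0 β⁻¹ (Or.inr (inv_pos.mpr hβpos).le)).tendsto
    rwa [Real.zero_rpow (inv_pos.mpr hβpos).ne'] at h
  have c2 : Tendsto (fun y : ℝ => y ^ α) (nhds 0) (nhds 0) := by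
    have h := (Real.continuousAt_rpow_const 0 α (Or.inr hαpos.le)).tendsto
    rwa [Real.zero_rpow hαpos.ne'] at h
  have hg : Tendsto (fun xs => B * ((x / (xs * th xs)) ^ β⁻¹) ^ α) atTop (nhds 0) := by
    have h := ((c2.comp c1).comp h1).const_mul B
    simpa [Function.comp] using h
  refine tendsto_of_tendsto_of_tendsto_of_le_of_le' tendsto_const_nhds hg ?_ ?_
  · filter_upwards [eventually_gt_atTop x] with xs hxs
    exact (key xs hxs).1.le
  · filter_upwards [eventually_gt_atTop x] with xs hxs
    exact (key xs hxs).2
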